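/- Let D be a triangulated disk with good ordering T₁,...,T_m, and suppose ∂D has a shortening move across T_i. Then the reordering T₁,...,T_{i-1},T_{i+1},...,T_m,T_i is also a good ordering, and each local maximum of its boundary-length sequence is less than or equal to the corresponding local maximum of the original sequence. -/

import Mathlib

open Finset

namespace TriSphere

variable {V : Type} [Fintype V] [DecidableEq V]

/-- The set of vertices of a set of faces. -/
def verts (F : Finset (Finset V)) : Finset V := F.biUnion id

/-- The edges of a set of (triangular) faces: the 2-element subsets of faces. -/
def edgs (F : Finset (Finset V)) : Finset (Finset V) :=
  F.biUnion fun f => f.powersetCard 2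

/-- The faces of `F` containing a given edge. -/
def facesOn (F : Finset (Finset V)) (e : Finset V) : Finset (Finset V) :=
  F.filter fun f => e ⊆ f

/-- Boundary edges: edges contained in exactly one face. -/
def bdryEdges (F : Finset (Finset V)) : Finset (Finset V) :=
  (edgs F).filter fun e => (facesOn F e).card = 1

/-- Boundary vertices. -/
def bdryVerts (F : Finset (Finset V)) : Finset V := (bdryEdges F).biUnion id

/-- The length of the boundary: the number of boundary vertices. -/
def bdryLen (F : Finset (Finset V)) : ℕ := (bdryVerts F).card

/-- The dual graph of a set of faces: two faces are adjacent iff they share an edge. -/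
def dualGraph (F : Finset (Finset V)) : SimpleGraph {f // f ∈ F} where
  Adj f g := f ≠ g ∧ (f.1 ∩ g.1).card = 2
  symm := ⟨fun f g h => ⟨h.1.symm, by rw [Finset.inter_comm]; exact h.2⟩⟩
  loopless := ⟨fun f h => h.1 rfl⟩

instance (F : Finset (Finset V)) : DecidableRel (dualGraph F).Adj :=
  fun f g => inferInstanceAs (Decidable (f ≠ g ∧ (f.1 ∩ g.1).card = 2))

/-- A combinatorial disk: a nonempty, dually connected set of triangles, each edge on at
most two faces, with Euler characteristic 1. -/
def IsDisk (F : Finset (Finset V)) : Prop :=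
  F.Nonempty ∧ (∀ f ∈ F, f.card = 3) ∧ (dualGraph F).Connected ∧
    (∀ e ∈ edgs F, (facesOn F e).card ≤ 2) ∧
    ((verts F).card : ℤ) - (edgs F).card + F.card = 1

/-- A simplicial triangulation of the 2-sphere: a closed simplicial surface
(every edge on exactly two faces, vertex links connected, dual graph connected)
with Euler characteristic 2. -/
structure SphereTri (V : Type) [Fintype V] [DecidableEq V] where
  faces : Finset (Finset V)
  nonempty : faces.Nonempty
  card3 : ∀ f ∈ faces, f.card = 3
  edge2 : ∀ e ∈ edgs faces, (facesOn faces e).card = 2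
  dualConn : (dualGraph faces).Connected
  linkConn : ∀ v : V, ∀ f ∈ faces, ∀ g ∈ faces, v ∈ f → v ∈ g →
    Relation.ReflTransGen
      (fun a b : Finset V => a ∈ faces ∧ b ∈ faces ∧ v ∈ a ∧ v ∈ b ∧ (a ∩ b).card = 2) f g
  euler : ((verts faces).card : ℤ) - (edgs faces).card + faces.card = 2
  allVerts : verts faces = Finset.univ

/-- The 1-skeleton of a triangulation of the sphere. -/
def skel (T : SphereTri V) : SimpleGraph V where
  Adj u v := u ≠ v ∧ ({u, v} : Finset V) ∈ edgs T.faces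
  symm := ⟨fun u v h => ⟨h.1.symm, by rw [Finset.pair_comm]; exact h.2⟩⟩
  loopless := ⟨fun u h => h.1 rfl⟩

/-- The three edges of a triangle. -/
def faceEdges (f : Finset V) : Finset (Finset V) := f.powersetCard 2

/-- An unordered pair, as a 2-element finset. -/
def symEdge (e : Sym2 V) : Finset V :=
  Sym2.lift ⟨fun a b => ({a, b} : Finset V), fun a b => Finset.pair_comm a b⟩ e

/-- The set of edges of a closed walk (e.g. of an embedded cycle). -/
def cycleEdges (T : SphereTri V) {v : V} (c : (skel T).Walk v v) : Finset (Finset V) :=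
  c.edges.toFinset.image symEdge

/-- The face `f` provides a shortening move for the cycle `c`: `f` meets `c` in exactly
two (necessarily adjacent) edges.  (A face meeting `c` in one edge gives a lengthening.) -/
def Shortens (T : SphereTri V) {v : V} (c : (skel T).Walk v v) (f : Finset V) : Prop :=
  f ∈ T.faces ∧ (faceEdges f ∩ cycleEdges T c).card = 2

/-- The cycle `c` is the boundary of a triangle of `T`. -/
def IsTriBdry (T : SphereTri V) {v : V} (c : (skel T).Walk v v) : Prop :=
  ∃ f ∈ T.faces, cycleEdges T c = faceEdges f

/-- A stable geodesic: an embedded cycle admitting no shortening move which is not the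
boundary of a triangle. -/
def StableGeodesic (T : SphereTri V) {v : V} (c : (skel T).Walk v v) : Prop :=
  c.IsCycle ∧ (∀ f, ¬ Shortens T c f) ∧ ¬ IsTriBdry T c

/-- Two faces are on the same side of the cycle `c` if they are joined by a dual path
which never crosses an edge of `c`. -/
def SameSide (T : SphereTri V) {v : V} (c : (skel T).Walk v v) (f g : Finset V) : Prop :=
  Relation.ReflTransGen
    (fun a b : Finset V => a ∈ T.faces ∧ b ∈ T.faces ∧ (a ∩ b).card = 2 ∧
      (a ∩ b) ∉ cycleEdges T c) f g

/-- Two faces on opposite sides of the cycle `c`. -/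
def OppSides (T : SphereTri V) {v : V} (c : (skel T).Walk v v) (f g : Finset V) : Prop :=
  f ∈ T.faces ∧ g ∈ T.faces ∧ ¬ SameSide T c f g

/-- An unstable geodesic: a cycle with shortening moves on both sides, such that every
pair of shortening moves on opposite sides uses triangles meeting in an edge of the cycle
(so the two moves cannot be performed simultaneously). -/
def UnstableGeodesic (T : SphereTri V) {v : V} (c : (skel T).Walk v v) : Prop :=
  c.IsCycle ∧
  (∃ f g, Shortens T c f ∧ Shortens T c g ∧ OppSides T c f g) ∧
  (∀ f g, Shortens T c f → Shortens T c g → OppSides T c f g →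
    ∃ e ∈ cycleEdges T c, e ⊆ f ∧ e ⊆ g)

/-- `seq L k = |∂ I_k|`, the boundary length of the union of the first `k` triangles. -/
def seq (L : List (Finset V)) (k : ℕ) : ℕ := bdryLen (L.take k).toFinset

/-- A good ordering of the faces `F`: every proper partial union is a disk. -/
def Good (F : Finset (Finset V)) (L : List (Finset V)) : Prop :=
  L.Nodup ∧ L.toFinset = F ∧
    ∀ k, 1 ≤ k → k < L.length → IsDisk (L.take k).toFinset

/-- `|∂ I_j|` is a local maximum of the ordering (with `|∂ I_0| = |∂ I_n| = 0`). -/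
def LocalMaxAt (L : List (Finset V)) (j : ℕ) : Prop :=
  1 ≤ j ∧ j < L.length ∧ seq L (j - 1) < seq L j ∧ seq L (j + 1) < seq L j

/-- `|∂ I_j|` is a local minimum of the ordering. -/
def LocalMinAt (L : List (Finset V)) (j : ℕ) : Prop :=
  1 ≤ j ∧ j < L.length ∧ seq L j < seq L (j - 1) ∧ seq L j < seq L (j + 1)

instance (L : List (Finset V)) : DecidablePred (LocalMaxAt L) := fun _ =>
  inferInstanceAs (Decidable (_ ∧ _ ∧ _ ∧ _))
instance (L : List (Finset V)) : DecidablePred (LocalMinAt L) := fun _ =>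
  inferInstanceAs (Decidable (_ ∧ _ ∧ _ ∧ _))

/-- The indices of the local maxima of an ordering. -/
def maxIndices (L : List (Finset V)) : List ℕ :=
  (List.range L.length).filter fun j => decide (LocalMaxAt L j)

/-- The indices of the local minima of an ordering. -/
def minIndices (L : List (Finset V)) : List ℕ :=
  (List.range L.length).filter fun j => decide (LocalMinAt L j)

/-- The width of an ordering: the list of values of its local maxima, sorted
in decreasing order (so widths are compared lexicographically). -/
def widthList (L : List (Finset V)) : List ℕ :=
  List.insertionSort (· ≥ ·) ((maxIndices L).map (seq L))

/-- A thin ordering: a good ordering minimizing the width lexicographically. -/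
def Thin (F : Finset (Finset V)) (L : List (Finset V)) : Prop :=
  Good F L ∧ ∀ L', Good F L' → ¬ List.Lex (· < ·) (widthList L') (widthList L)

/-- Bridge position: a good ordering with a single local maximum and no local minima. -/
def Bridge (F : Finset (Finset V)) (L : List (Finset V)) : Prop :=
  Good F L ∧ (∃! j, LocalMaxAt L j) ∧ ∀ j, ¬ LocalMinAt L j

/-- A wheel: a triangulated disk whose dual graph is a cycle (connected, all degrees 2). -/
def IsWheel (F : Finset (Finset V)) : Prop :=
  3 ≤ F.card ∧ (dualGraph F).Connected ∧ ∀ f, (dualGraph F).degree f = 2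

set_option linter.unusedSectionVars false
set_option maxHeartbeats 1000000

section Basic

lemma mem_verts {F : Finset (Finset V)} {w : V} :
    w ∈ verts F ↔ ∃ f ∈ F, w ∈ f := by
  simp [verts]

lemma mem_faceEdges {f e : Finset V} : e ∈ faceEdges f ↔ e ⊆ f ∧ e.card = 2 := by
  simp [faceEdges, Finset.mem_powersetCard]

lemma mem_edgs {F : Finset (Finset V)} {e : Finset V} :
    e ∈ edgs F ↔ ∃ f ∈ F, e ⊆ f ∧ e.card = 2 := by
  simp [edgs, Finset.mem_powersetCard]

lemma card_of_mem_edgs {F : Finset (Finset V)} {e : Finset V} (h : e ∈ edgs F) : e.card = 2 := by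
  obtain ⟨f, _, _, hc⟩ := mem_edgs.1 h
  exact hc

lemma faceEdges_subset_edgs {F : Finset (Finset V)} {f : Finset V} (hf : f ∈ F) :
    faceEdges f ⊆ edgs F := fun e he => by
  rw [mem_faceEdges] at he
  exact mem_edgs.2 ⟨f, hf, he.1, he.2⟩

lemma mem_facesOn {F : Finset (Finset V)} {e f : Finset V} :
    f ∈ facesOn F e ↔ f ∈ F ∧ e ⊆ f := by simp [facesOn]

lemma facesOn_subset {F F' : Finset (Finset V)} (h : F' ⊆ F) (e : Finset V) :
    facesOn F' e ⊆ facesOn F e := filter_subset_filter _ h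

lemma edgs_subset {F F' : Finset (Finset V)} (h : F' ⊆ F) : edgs F' ⊆ edgs F :=
  biUnion_subset_biUnion_of_subset_left _ h

lemma faceEdges_triple {x y z : V} (hxy : x ≠ y) (hxz : x ≠ z) (hyz : y ≠ z) :
    faceEdges ({x, y, z} : Finset V) = {{x, y}, {x, z}, {y, z}} := by
  ext e
  rw [mem_faceEdges]
  constructor
  · rintro ⟨hsub, hcard⟩
    obtain ⟨u, w, huw, rfl⟩ := Finset.card_eq_two.1 hcard
    have hu : u ∈ ({x, y, z} : Finset V) := hsub (by simp)
    have hw : w ∈ ({x, y, z} : Finset V) := hsub (by simp)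
    simp only [Finset.mem_insert, Finset.mem_singleton] at hu hw ⊢
    rcases hu with rfl | rfl | rfl <;> rcases hw with rfl | rfl | rfl <;>
      simp_all [Finset.pair_comm]
  · intro h
    simp only [Finset.mem_insert, Finset.mem_singleton] at h
    rcases h with rfl | rfl | rfl
    · exact ⟨by intro t ht; simp at ht; rcases ht with rfl | rfl <;> simp,
        Finset.card_pair hxy⟩
    · exact ⟨by intro t ht; simp at ht; rcases ht with rfl | rfl <;> simp,
        Finset.card_pair hxz⟩
    · exact ⟨by intro t ht; simp at ht; rcases ht with rfl | rfl <;> simp,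
        Finset.card_pair hyz⟩

lemma card_faceEdges {f : Finset V} (h : f.card = 3) : (faceEdges f).card = 3 := by
  rw [faceEdges, Finset.card_powersetCard, h]
  rfl

lemma edgs_singleton (f : Finset V) : edgs {f} = faceEdges f := by
  simp [edgs, faceEdges]

lemma facesOn_singleton_of_subset {f e : Finset V} (h : e ⊆ f) :
    facesOn {f} e = {f} := by
  ext g; simp [mem_facesOn]
  rintro rfl; exact h

lemma bdryEdges_singleton {f : Finset V} : bdryEdges {f} = faceEdges f := by
  ext e
  simp only [bdryEdges, Finset.mem_filter, edgs_singleton]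
  constructor
  · exact fun h => h.1
  · intro h
    refine ⟨h, ?_⟩
    rw [facesOn_singleton_of_subset (mem_faceEdges.1 h).1]
    simp

lemma bdryVerts_singleton {f : Finset V} (h3 : f.card = 3) : bdryVerts {f} = f := by
  ext w
  simp only [bdryVerts, Finset.mem_biUnion, bdryEdges_singleton, id]
  constructor
  · rintro ⟨e, he, hwe⟩
    exact (mem_faceEdges.1 he).1 hwe
  · intro hw
    obtain ⟨u, hu, huw⟩ := Finset.exists_mem_ne (s := f) (by omega) w
    refine ⟨{w, u}, mem_faceEdges.2 ⟨?_, Finset.card_pair (Ne.symm huw)⟩, by simp⟩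
    intro t ht; simp at ht; rcases ht with rfl | rfl <;> assumption

lemma bdryLen_singleton {f : Finset V} (h3 : f.card = 3) : bdryLen {f} = 3 := by
  rw [bdryLen, bdryVerts_singleton h3, h3]

end Basic

private lemma no_lex_of_countP :
    ∀ {Y X : List ℕ}, List.Lex (· < ·) Y X → Y.Pairwise (· ≥ ·) → X.Pairwise (· ≥ ·) →
      (∀ n : ℕ, X.countP (fun x => decide (n ≤ x)) ≤ Y.countP (fun x => decide (n ≤ x))) →
      False := by
  intro Y X h
  induction h with
  | nil =>
    rename_i a l
    intro _ _ hc
    have := hc a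
    simp [List.countP_cons] at this
  | @cons a l₁ l₂ _ ih =>
    intro hY hX hc
    exact ih hY.of_cons hX.of_cons (fun n => by
      have := hc n
      simp only [List.countP_cons] at this
      omega)
  | @rel a l₁ b l₂ hab =>
    intro hY hX hc
    have h0 : l₁.countP (fun x => decide (b ≤ x)) = 0 := by
      rw [List.countP_eq_zero]
      intro x hx
      have : x ≤ a := List.rel_of_pairwise_cons hY hx
      simp; omega
    have := hc b
    simp only [List.countP_cons, h0] at this
    have hba : ¬ (b ≤ a) := by omega
    simp [hba] at this

private lemma countP_le_of_forall₂ {xs zs : List ℕ} (h : List.Forall₂ (· ≤ ·) xs zs) (n : ℕ) :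
    xs.countP (fun x => decide (n ≤ x)) ≤ zs.countP (fun x => decide (n ≤ x)) := by
  induction h with
  | nil => simp
  | @cons a b l₁ l₂ hab _ ih =>
    simp only [List.countP_cons]
    have : (if decide (n ≤ a) = true then 1 else 0) ≤ (if decide (n ≤ b) = true then 1 else 0) := by
      by_cases hna : n ≤ a
      · have : n ≤ b := le_trans hna hab
        simp [hna, this]
      · simp [hna]
    omega

/-- The key sorting lemma: if the entries of `xs` are dominated by the entries of a
sublist of `ys`, then sorting in decreasing order, `ys` is not lexicographically
smaller than `xs`. -/
lemma no_lex_of_dominated {xs zs ys : List ℕ}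
    (h₁ : List.Forall₂ (· ≤ ·) xs zs) (h₂ : zs.Sublist ys) :
    ¬ List.Lex (· < ·) (List.insertionSort (· ≥ ·) ys) (List.insertionSort (· ≥ ·) xs) := by
  intro h
  refine no_lex_of_countP h (List.pairwise_insertionSort _ _) (List.pairwise_insertionSort _ _) ?_
  intro n
  rw [(List.perm_insertionSort (· ≥ ·) xs).countP_eq, (List.perm_insertionSort (· ≥ ·) ys).countP_eq]
  exact le_trans (countP_le_of_forall₂ h₁ n) h₂.countP_le

private lemma sublist_of_subset_pairwise_lt {l₁ l₂ : List ℕ}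
    (h₁ : l₁.Pairwise (· < ·)) (h₂ : l₂.Pairwise (· < ·)) (hs : ∀ x ∈ l₁, x ∈ l₂) :
    l₁.Sublist l₂ := by
  haveI : Std.Antisymm (α := ℕ) (· < ·) := ⟨fun a b h1 h2 => absurd h1 (asymm h2)⟩
  exact List.sublist_of_subperm_of_pairwise (h₁.nodup.subperm hs) h₁ h₂


lemma exists_adj_of_connected {α : Type*} {G : SimpleGraph α} (h : G.Connected) {u w : α}
    (hne : u ≠ w) : ∃ x, G.Adj u x := by
  obtain ⟨p⟩ := h.preconnected u w
  cases p with
  | nil => exact absurd rfl hne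
  | cons h p => exact ⟨_, h⟩

lemma walk_avoid {α : Type*} {G : SimpleGraph α} (t : α)
    (huniq : ∀ x y, G.Adj x t → G.Adj y t → x = y) :
    ∀ (n : ℕ) {u w : α} (p : G.Walk u w), p.length = n → u ≠ t → w ≠ t →
      ∃ q : G.Walk u w, t ∉ q.support := by
  intro n
  induction n using Nat.strong_induction_on with
  | _ n ih =>
    intro u w p hlen hu hw
    cases p with
    | nil => exact ⟨SimpleGraph.Walk.nil, by simpa using fun h => hu h.symm⟩
    | @cons _ x _ hadj p' =>
      by_cases hx : x = t
      · subst hx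
        cases p' with
        | nil => exact absurd rfl hw
        | @cons _ y _ hadj2 p'' =>
          have hy : u = y := huniq u y hadj (hadj2.symm)
          subst hy
          have hlt : p''.length < n := by
            simp [SimpleGraph.Walk.length_cons] at hlen; omega
          exact ih _ hlt p'' rfl hu hw
      · have hlt : p'.length < n := by
          simp [SimpleGraph.Walk.length_cons] at hlen; omega
        obtain ⟨q', hq'⟩ := ih _ hlt p' rfl hx hw
        exact ⟨SimpleGraph.Walk.cons hadj q', by
          simp [SimpleGraph.Walk.support_cons]
          exact ⟨fun h => hu h.symm, fun h => hq' h⟩⟩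

lemma reachable_dual_subset {F F' : Finset (Finset V)}
    {u w : {f // f ∈ F}} (p : (dualGraph F).Walk u w)
    (hp : ∀ x ∈ p.support, x.1 ∈ F') :
    ∀ (hu : u.1 ∈ F') (hw : w.1 ∈ F'),
      (dualGraph F').Reachable ⟨u.1, hu⟩ ⟨w.1, hw⟩ := by
  induction p with
  | nil => intro hu hw; rfl
  | @cons a b c hadj p ih =>
    intro hu hw
    have hb : b.1 ∈ F' := hp b (by simp [SimpleGraph.Walk.support_cons])
    have hadj' : (dualGraph F').Adj ⟨a.1, hu⟩ ⟨b.1, hb⟩ := by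
      refine ⟨?_, hadj.2⟩
      intro h
      have : a.1 = b.1 := Subtype.mk_eq_mk.mp h
      exact hadj.1 (Subtype.ext this)
    exact (hadj'.reachable).trans (ih (fun x hx => hp x (by simp [SimpleGraph.Walk.support_cons, hx])) hb hw)

lemma dual_connected_erase {F : Finset (Finset V)} (hconn : (dualGraph F).Connected)
    {T : Finset V} (hT : T ∈ F)
    (huniq : ∀ x y : {f // f ∈ F}, (dualGraph F).Adj x ⟨T, hT⟩ → (dualGraph F).Adj y ⟨T, hT⟩ → x = y)
    (hne : (F.erase T).Nonempty) : (dualGraph (F.erase T)).Connected := by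
  obtain ⟨f₀, hf₀⟩ := hne
  have : Nonempty {f // f ∈ F.erase T} := ⟨⟨f₀, hf₀⟩⟩
  refine ⟨fun u w => ?_⟩
  have hu' : u.1 ∈ F := mem_of_mem_erase u.2
  have hw' : w.1 ∈ F := mem_of_mem_erase w.2
  obtain ⟨p⟩ := hconn.preconnected ⟨u.1, hu'⟩ ⟨w.1, hw'⟩
  have hune : (⟨u.1, hu'⟩ : {f // f ∈ F}) ≠ ⟨T, hT⟩ := by
    intro h; exact (ne_of_mem_erase u.2) (congrArg Subtype.val h)
  have hwne : (⟨w.1, hw'⟩ : {f // f ∈ F}) ≠ ⟨T, hT⟩ := by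
    intro h; exact (ne_of_mem_erase w.2) (congrArg Subtype.val h)
  obtain ⟨q, hq⟩ := walk_avoid ⟨T, hT⟩ huniq p.length p rfl hune hwne
  have hsup : ∀ x ∈ q.support, x.1 ∈ F.erase T := by
    intro x hx
    refine mem_erase.2 ⟨?_, x.2⟩
    intro h
    exact hq (by rwa [show x = ⟨T, hT⟩ from Subtype.ext h] at hx)
  have := reachable_dual_subset q hsup u.2 w.2
  simpa using this


section Chi

variable (G : Finset (Finset V))

private def incA : Matrix {w // w ∈ verts G} {e // e ∈ edgs G} (ZMod 2) :=
  fun w e => if w.1 ∈ e.1 then 1 else 0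

private def dMap : ({e // e ∈ edgs G} → ZMod 2) →ₗ[ZMod 2] ({w // w ∈ verts G} → ZMod 2) :=
  (incA G).mulVecLin

private def cVec (f : {f // f ∈ G}) : {e // e ∈ edgs G} → ZMod 2 :=
  fun e => if e.1 ⊆ f.1 then 1 else 0

variable {G}

private lemma dMap_apply (x : {e // e ∈ edgs G} → ZMod 2) (w : {w // w ∈ verts G}) :
    dMap G x w = ∑ e : {e // e ∈ edgs G}, (if w.1 ∈ e.1 then 1 else 0) * x e := by
  simp [dMap, Matrix.mulVecLin_apply, Matrix.mulVec, dotProduct, incA]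

private lemma zmod_eq_of_add_eq_zero {a b : ZMod 2} (h : a + b = 0) : a = b := by
  have := eq_neg_of_add_eq_zero_left h
  rwa [CharTwo.neg_eq] at this

/-- The indicator vectors of the faces lie in the kernel of the incidence map. -/
private lemma dMap_cVec (h3 : ∀ f ∈ G, f.card = 3) (f : {f // f ∈ G}) :
    dMap G (cVec G f) = 0 := by
  funext w
  rw [dMap_apply]
  have : ∀ e : {e // e ∈ edgs G}, (if w.1 ∈ e.1 then (1 : ZMod 2) else 0) * cVec G f e
      = if e.1 ∈ faceEdges f.1 ∧ w.1 ∈ e.1 then 1 else 0 := by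
    intro e
    simp only [cVec, mem_faceEdges]
    have hc : e.1.card = 2 := card_of_mem_edgs e.2
    by_cases h1 : w.1 ∈ e.1 <;> by_cases h2 : e.1 ⊆ f.1 <;> simp [h1, h2, hc]
  simp only [this]
  rw [Finset.sum_coe_sort (edgs G) (fun e => if e ∈ faceEdges f.1 ∧ w.1 ∈ e then (1 : ZMod 2) else 0)]
  rw [← Finset.sum_filter]
  have hfe : Finset.filter (fun e => e ∈ faceEdges f.1 ∧ w.1 ∈ e) (edgs G)
      = Finset.filter (fun e => w.1 ∈ e) (faceEdges f.1) := by
    ext e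
    simp only [Finset.mem_filter]
    constructor
    · rintro ⟨_, h1, h2⟩; exact ⟨h1, h2⟩
    · rintro ⟨h1, h2⟩; exact ⟨faceEdges_subset_edgs f.2 h1, h1, h2⟩
  rw [hfe]
  obtain ⟨x, y, z, hxy, hxz, hyz, hf⟩ := Finset.card_eq_three.1 (h3 f.1 f.2)
  rw [hf, faceEdges_triple hxy hxz hyz]
  have e1 : ({x, y} : Finset V) ≠ {x, z} := by
    intro h
    have : y ∈ ({x, z} : Finset V) := by rw [← h]; simp
    simp at this; tauto
  have e2 : ({x, y} : Finset V) ≠ {y, z} := by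
    intro h
    have : x ∈ ({y, z} : Finset V) := by rw [← h]; simp
    simp at this; tauto
  have e3 : ({x, z} : Finset V) ≠ {y, z} := by
    intro h
    have : x ∈ ({y, z} : Finset V) := by rw [← h]; simp
    simp at this; tauto
  rw [Finset.filter_insert, Finset.filter_insert, Finset.filter_singleton]
  by_cases hwx : w.1 = x <;> by_cases hwy : w.1 = y <;> by_cases hwz : w.1 = z
  all_goals simp_all
  all_goals decide

/-- Euler bound: a nonempty, dually connected pure triangle complex in which every edge
lies on at most two faces and some edge lies on exactly one face satisfies
`F + V ≤ E + 1`, i.e. `χ ≤ 1`. -/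
lemma card_add_verts_le (hne : G.Nonempty)
    (h3 : ∀ f ∈ G, f.card = 3)
    (h2 : ∀ e ∈ edgs G, (facesOn G e).card ≤ 2)
    (hconn : (dualGraph G).Connected)
    (hbd : ∃ e ∈ edgs G, (facesOn G e).card = 1) :
    G.card + (verts G).card ≤ (edgs G).card + 1 := by
  classical
  -- the sum over faces of the coefficient functional, evaluated on an edge
  have eval_sum : ∀ (g : {f // f ∈ G} → ZMod 2) (e : {e // e ∈ edgs G}),
      (∑ f : {f // f ∈ G}, g f • cVec G f) e
        = ∑ f ∈ Finset.univ.filter (fun f : {f // f ∈ G} => e.1 ⊆ f.1), g f := by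
    intro g e
    rw [Finset.sum_apply]
    rw [Finset.sum_filter]
    congr 1
    funext f
    simp only [Pi.smul_apply, cVec, smul_eq_mul]
    by_cases h : e.1 ⊆ f.1 <;> simp [h]
  -- independence of the face vectors
  have hindep : LinearIndependent (ZMod 2) (cVec G) := by
    rw [Fintype.linearIndependent_iff]
    intro g hg
    -- first: g is constant along dual adjacency
    have hstep : ∀ u w : {f // f ∈ G}, (dualGraph G).Adj u w → g u = g w := by
      intro u w hadj
      have hne' : u.1 ≠ w.1 := fun h => hadj.1 (Subtype.ext h)
      set e : Finset V := u.1 ∩ w.1 with he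
      have heG : e ∈ edgs G := mem_edgs.2 ⟨u.1, u.2, Finset.inter_subset_left, hadj.2⟩
      have hfaces : facesOn G e = {u.1, w.1} := by
        refine (Finset.eq_of_subset_of_card_le ?_ ?_).symm
        · intro t ht
          simp only [Finset.mem_insert, Finset.mem_singleton] at ht
          rcases ht with rfl | rfl
          · exact mem_facesOn.2 ⟨u.2, Finset.inter_subset_left⟩
          · exact mem_facesOn.2 ⟨w.2, Finset.inter_subset_right⟩
        · rw [Finset.card_pair hne']
          exact h2 e heG
      have hfilter : Finset.univ.filter (fun f : {f // f ∈ G} => e ⊆ f.1) = {u, w} := by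
        ext t
        simp only [Finset.mem_filter, Finset.mem_univ, true_and, Finset.mem_insert,
          Finset.mem_singleton]
        constructor
        · intro ht
          have : t.1 ∈ facesOn G e := mem_facesOn.2 ⟨t.2, ht⟩
          rw [hfaces] at this
          simp only [Finset.mem_insert, Finset.mem_singleton] at this
          rcases this with h | h
          · exact Or.inl (Subtype.ext h)
          · exact Or.inr (Subtype.ext h)
        · rintro (rfl | rfl)
          · exact Finset.inter_subset_left
          · exact Finset.inter_subset_right
      have h0 : g u + g w = 0 := by
        have := congrFun hg ⟨e, heG⟩
        rw [eval_sum, hfilter] at this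
        rwa [Finset.sum_pair (fun h => hadj.1 h)] at this
      exact zmod_eq_of_add_eq_zero h0
    have hconst : ∀ u w : {f // f ∈ G}, g u = g w := by
      intro u w
      obtain ⟨p⟩ := hconn.preconnected u w
      induction p with
      | nil => rfl
      | cons hadj p ih => rw [hstep _ _ hadj]; exact ih
    -- boundary edge kills the constant
    obtain ⟨e₀, he₀, hb1⟩ := hbd
    obtain ⟨f₀, hf₀⟩ := Finset.card_eq_one.1 hb1
    have hf₀G : f₀ ∈ G := by
      have : f₀ ∈ facesOn G e₀ := by rw [hf₀]; simp
      exact (mem_facesOn.1 this).1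
    have hfilter0 : Finset.univ.filter (fun f : {f // f ∈ G} => e₀ ⊆ f.1)
        = {(⟨f₀, hf₀G⟩ : {f // f ∈ G})} := by
      ext t
      simp only [Finset.mem_filter, Finset.mem_univ, true_and, Finset.mem_singleton]
      constructor
      · intro ht
        have : t.1 ∈ facesOn G e₀ := mem_facesOn.2 ⟨t.2, ht⟩
        rw [hf₀] at this
        exact Subtype.ext (Finset.mem_singleton.1 this)
      · rintro rfl
        have : f₀ ∈ facesOn G e₀ := by rw [hf₀]; simp
        exact (mem_facesOn.1 this).2
    have hg0 : g ⟨f₀, hf₀G⟩ = 0 := by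
      have := congrFun hg ⟨e₀, he₀⟩
      rw [eval_sum, hfilter0, Finset.sum_singleton] at this
      exact this
    intro f
    rw [hconst f ⟨f₀, hf₀G⟩, hg0]
  -- the face vectors live in the kernel
  have hker : ∀ f : {f // f ∈ G}, cVec G f ∈ LinearMap.ker (dMap G) :=
    fun f => LinearMap.mem_ker.2 (dMap_cVec h3 f)
  -- number of faces bounds the kernel dimension
  have hGker : G.card ≤ Module.finrank (ZMod 2) (LinearMap.ker (dMap G)) := by
    have hli : LinearIndependent (ZMod 2)
        (fun f : {f // f ∈ G} => (⟨cVec G f, hker f⟩ : LinearMap.ker (dMap G))) := by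
      apply LinearIndependent.of_comp (LinearMap.ker (dMap G)).subtype
      exact hindep
    have := hli.fintype_card_le_finrank
    rwa [Fintype.card_coe] at this
  -- range dimension: at least |verts| - 1
  -- single edges give single vectors
  have hsing : ∀ (e : Finset V) (he : e ∈ edgs G) (u w : {w // w ∈ verts G}),
      u.1 ∈ e → w.1 ∈ e → u ≠ w →
      Pi.single u (1 : ZMod 2) + Pi.single w 1 ∈ LinearMap.range (dMap G) := by
    intro e he u w hu hw huw
    refine ⟨fun e' => if e'.1 = e then 1 else 0, ?_⟩
    funext w'
    rw [dMap_apply]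
    have : ∀ e' : {e // e ∈ edgs G},
        (if w'.1 ∈ e'.1 then (1 : ZMod 2) else 0) * (if e'.1 = e then 1 else 0)
          = if e' = (⟨e, he⟩ : {e // e ∈ edgs G}) then (if w'.1 ∈ e'.1 then 1 else 0) else 0 := by
      intro e'
      by_cases h : e'.1 = e
      · have : e' = (⟨e, he⟩ : {e // e ∈ edgs G}) := Subtype.ext h
        simp [this]
      · have : e' ≠ (⟨e, he⟩ : {e // e ∈ edgs G}) := fun hh => h (congrArg Subtype.val hh)
        simp [h, this]
    simp only [this]
    rw [Finset.sum_ite_eq' Finset.univ]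
    simp only [Finset.mem_univ, if_true]
    -- e = {u.1, w.1}
    have hee : e = {u.1, w.1} := by
      refine (Finset.eq_of_subset_of_card_le ?_ ?_).symm
      · intro t ht
        simp only [Finset.mem_insert, Finset.mem_singleton] at ht
        rcases ht with rfl | rfl <;> assumption
      · rw [card_of_mem_edgs he, Finset.card_pair (fun h => huw (Subtype.ext h))]
    have huw' : u.1 ≠ w.1 := fun h => huw (Subtype.ext h)
    by_cases h1 : w' = u
    · subst h1
      simp [hee, Pi.single_apply, huw'.symm, huw]
    · by_cases h2 : w' = w
      · subst h2
        have h1s : u ≠ w' := Ne.symm h1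
        simp [hee, Pi.single_apply, h1, h1s, huw']
      · have hn1 : w'.1 ≠ u.1 := fun h => h1 (Subtype.ext h)
        have hn2 : w'.1 ≠ w.1 := fun h => h2 (Subtype.ext h)
        simp [hee, Pi.single_apply, h1, h2, hn1, hn2]
  -- vectors for two vertices of a common face
  have hface : ∀ (f : Finset V), f ∈ G → ∀ (u w : {w // w ∈ verts G}),
      u.1 ∈ f → w.1 ∈ f →
      Pi.single u (1 : ZMod 2) + Pi.single w 1 ∈ LinearMap.range (dMap G) := by
    intro f hf u w hu hw
    by_cases huw : u = w
    · subst huw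
      have : (Pi.single u (1 : ZMod 2) : {w // w ∈ verts G} → ZMod 2) + Pi.single u 1 = 0 := by
        funext t; simp [CharTwo.add_self_eq_zero]
      rw [this]
      exact Submodule.zero_mem _
    · have huw' : u.1 ≠ w.1 := fun h => huw (Subtype.ext h)
      exact hsing {u.1, w.1} (mem_edgs.2 ⟨f, hf, by
        intro t ht; simp at ht; rcases ht with rfl | rfl <;> assumption,
        Finset.card_pair huw'⟩) u w (by simp) (by simp) huw
  -- vectors for vertices joined through the dual graph
  have hwalk : ∀ (a b : {f // f ∈ G}) (p : (dualGraph G).Walk a b)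
      (u w : {w // w ∈ verts G}), u.1 ∈ a.1 → w.1 ∈ b.1 →
      Pi.single u (1 : ZMod 2) + Pi.single w 1 ∈ LinearMap.range (dMap G) := by
    intro a b p
    induction p with
    | @nil a => intro u w hu hw; exact hface a.1 a.2 u w hu hw
    | @cons a x b hadj p ih =>
      intro u w hu hw
      have hx : (a.1 ∩ x.1).Nonempty := by
        rw [← Finset.card_pos, hadj.2]; omega
      obtain ⟨s, hs⟩ := hx
      have hsv : s ∈ verts G := mem_verts.2 ⟨a.1, a.2, (Finset.mem_inter.1 hs).1⟩
      have m1 := hface _ a.2 u ⟨s, hsv⟩ hu (Finset.mem_inter.1 hs).1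
      have m2 := ih ⟨s, hsv⟩ w (Finset.mem_inter.1 hs).2 hw
      have hsum := Submodule.add_mem _ m1 m2
      have hss : (Pi.single (⟨s, hsv⟩ : {w // w ∈ verts G}) (1 : ZMod 2) : {w // w ∈ verts G} → ZMod 2)
          + Pi.single ⟨s, hsv⟩ 1 = 0 := by
        funext t; simp [CharTwo.add_self_eq_zero]
      have heq : (Pi.single u (1 : ZMod 2) : {w // w ∈ verts G} → ZMod 2)
          + Pi.single ⟨s, hsv⟩ 1
          + (Pi.single ⟨s, hsv⟩ 1 + Pi.single w 1)
          = Pi.single u 1 + Pi.single w 1 := by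
        calc (Pi.single u (1 : ZMod 2) : {w // w ∈ verts G} → ZMod 2)
            + Pi.single ⟨s, hsv⟩ 1 + (Pi.single ⟨s, hsv⟩ 1 + Pi.single w 1)
            = Pi.single u 1 + Pi.single w 1
              + ((Pi.single (⟨s, hsv⟩ : {w // w ∈ verts G}) (1 : ZMod 2) : {w // w ∈ verts G} → ZMod 2)
                + Pi.single ⟨s, hsv⟩ 1) := by abel
          _ = Pi.single u 1 + Pi.single w 1 := by rw [hss, add_zero]
      rwa [heq] at hsum
  -- all pairs of vertices
  have hall : ∀ u w : {w // w ∈ verts G},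
      Pi.single u (1 : ZMod 2) + Pi.single w 1 ∈ LinearMap.range (dMap G) := by
    intro u w
    obtain ⟨fu, hfu, hufu⟩ := mem_verts.1 u.2
    obtain ⟨fw, hfw, hwfw⟩ := mem_verts.1 w.2
    obtain ⟨p⟩ := hconn.preconnected ⟨fu, hfu⟩ ⟨fw, hfw⟩
    exact hwalk _ _ p u w hufu hwfw
  -- a base vertex
  obtain ⟨f₁, hf₁⟩ := hne
  have hvne : (verts G).Nonempty := by
    have h1 : f₁.card = 3 := h3 f₁ hf₁
    have : f₁.Nonempty := Finset.card_pos.1 (by omega)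
    obtain ⟨v₁, hv₁⟩ := this
    exact ⟨v₁, mem_verts.2 ⟨f₁, hf₁, hv₁⟩⟩
  obtain ⟨u₀v, hu₀v⟩ := hvne
  set u₀ : {w // w ∈ verts G} := ⟨u₀v, hu₀v⟩
  -- the range dimension bound
  have hrange : (verts G).card - 1 ≤ Module.finrank (ZMod 2) (LinearMap.range (dMap G)) := by
    have hmem : ∀ w : {x : {w // w ∈ verts G} // x ≠ u₀},
        Pi.single w.1 (1 : ZMod 2) + Pi.single u₀ 1 ∈ LinearMap.range (dMap G) :=
      fun w => hall w.1 u₀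
    have hli : LinearIndependent (ZMod 2)
        (fun w : {x : {w // w ∈ verts G} // x ≠ u₀} =>
          (⟨Pi.single w.1 (1 : ZMod 2) + Pi.single u₀ 1, hmem w⟩ :
            LinearMap.range (dMap G))) := by
      apply LinearIndependent.of_comp (LinearMap.range (dMap G)).subtype
      rw [Fintype.linearIndependent_iff]
      intro k hk w'
      have := congrFun hk w'.1
      simp only [Finset.sum_apply, Pi.smul_apply, Pi.add_apply, Pi.single_apply,
        smul_eq_mul, Submodule.coe_subtype, Function.comp_apply, Pi.zero_apply] at this
      have hz : ∀ w : {x : {w // w ∈ verts G} // x ≠ u₀},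
          k w * ((if w'.1 = w.1 then (1 : ZMod 2) else 0) + if w'.1 = u₀ then 1 else 0)
            = if w = w' then k w else 0 := by
        intro w
        have hwu : w'.1 ≠ u₀ := w'.2
        by_cases h : w = w'
        · subst h
          simp [hwu]
        · have : w'.1 ≠ w.1 := fun hh => h (Subtype.ext hh.symm)
          simp [this, hwu, h]
      rw [Finset.sum_congr rfl (fun w _ => hz w)] at this
      rw [Finset.sum_ite_eq' Finset.univ] at this
      simpa using this
    have hcard := hli.fintype_card_le_finrank
    have : Fintype.card {x : {w // w ∈ verts G} // x ≠ u₀}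
        = Fintype.card {w // w ∈ verts G} - 1 := by
      have := Fintype.card_subtype_compl (fun x : {w // w ∈ verts G} => x = u₀)
      rw [Fintype.card_subtype_eq] at this
      exact this
    rw [this, Fintype.card_coe] at hcard
    exact hcard
  -- rank-nullity
  have hrn := LinearMap.finrank_range_add_finrank_ker (dMap G)
  rw [Module.finrank_pi, Fintype.card_coe] at hrn
  have hv1 : 1 ≤ (verts G).card := Finset.card_pos.2 ⟨u₀v, hu₀v⟩
  omega



end Chi

section Core

/-- Context for a shortening move: `T ∈ F` is a triangle `{v, a, b}` whose two edges
at the apex `v` are boundary edges of `F`, while `{a, b}` is an interior edge shared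
with the unique dual neighbour `gf` of `T`; moreover `v` lies on no other face. -/
structure PreCtx (F : Finset (Finset V)) (T : Finset V) (v a b : V) : Prop where
  hTF : T ∈ F
  hva : v ≠ a
  hvb : v ≠ b
  hab : a ≠ b
  hT : T = {v, a, b}
  hbd1 : ({v, a} : Finset V) ∈ bdryEdges F
  hbd2 : ({v, b} : Finset V) ∈ bdryEdges F

namespace PreCtx

variable {F : Finset (Finset V)} {T gf : Finset V} {v a b : V}

lemma hT3 (c : PreCtx F T v a b) : T.card = 3 := by
  rw [c.hT]
  rw [Finset.card_insert_of_notMem (by simp [c.hva, c.hvb]),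
    Finset.card_pair c.hab]

lemma e1_ne_e2 (c : PreCtx F T v a b) : ({v, a} : Finset V) ≠ {v, b} := by
  intro h
  have : a ∈ ({v, b} : Finset V) := by rw [← h]; simp
  simp at this
  rcases this with h | h
  · exact c.hva h.symm
  · exact c.hab h

lemma e1_ne_e3 (c : PreCtx F T v a b) : ({v, a} : Finset V) ≠ {a, b} := by
  intro h
  have : v ∈ ({a, b} : Finset V) := by rw [← h]; simp
  simp at this
  rcases this with h | h
  · exact c.hva h
  · exact c.hvb h

lemma e2_ne_e3 (c : PreCtx F T v a b) : ({v, b} : Finset V) ≠ {a, b} := by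
  intro h
  have : v ∈ ({a, b} : Finset V) := by rw [← h]; simp
  simp at this
  rcases this with h | h
  · exact c.hva h
  · exact c.hvb h

lemma e1_subset (c : PreCtx F T v a b) : ({v, a} : Finset V) ⊆ T := by
  rw [c.hT]; intro t ht; simp at ht; rcases ht with rfl | rfl <;> simp

lemma e2_subset (c : PreCtx F T v a b) : ({v, b} : Finset V) ⊆ T := by
  rw [c.hT]; intro t ht; simp at ht; rcases ht with rfl | rfl <;> simp

lemma e3_subset (c : PreCtx F T v a b) : ({a, b} : Finset V) ⊆ T := by
  rw [c.hT]; intro t ht; simp at ht; rcases ht with rfl | rfl <;> simp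

lemma faceEdges_T (c : PreCtx F T v a b) :
    faceEdges T = {({v, a} : Finset V), {v, b}, {a, b}} := by
  rw [c.hT, faceEdges_triple c.hva c.hvb c.hab]

lemma facesOn_e1 (c : PreCtx F T v a b) : facesOn F {v, a} = {T} := by
  have h1 := (Finset.mem_filter.1 c.hbd1).2
  obtain ⟨t, ht⟩ := Finset.card_eq_one.1 h1
  have hTmem : T ∈ facesOn F {v, a} := mem_facesOn.2 ⟨c.hTF, c.e1_subset⟩
  rw [ht] at hTmem ⊢
  rw [Finset.mem_singleton] at hTmem
  rw [hTmem]

lemma facesOn_e2 (c : PreCtx F T v a b) : facesOn F {v, b} = {T} := by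
  have h1 := (Finset.mem_filter.1 c.hbd2).2
  obtain ⟨t, ht⟩ := Finset.card_eq_one.1 h1
  have hTmem : T ∈ facesOn F {v, b} := mem_facesOn.2 ⟨c.hTF, c.e2_subset⟩
  rw [ht] at hTmem ⊢
  rw [Finset.mem_singleton] at hTmem
  rw [hTmem]

lemma sub_edges (c : PreCtx F T v a b) {e : Finset V} (he : e ⊆ T) (hc : e.card = 2) :
    e = {v, a} ∨ e = {v, b} ∨ e = {a, b} := by
  have : e ∈ faceEdges T := mem_faceEdges.2 ⟨he, hc⟩
  rw [c.faceEdges_T] at this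
  simpa using this

lemma vmem (c : PreCtx F T v a b) : v ∈ T := by rw [c.hT]; simp
lemma amem (c : PreCtx F T v a b) : a ∈ T := by rw [c.hT]; simp
lemma bmem (c : PreCtx F T v a b) : b ∈ T := by rw [c.hT]; simp

end PreCtx

end Core

section Core2

variable {F I : Finset (Finset V)} {T gf : Finset V} {v a b : V}

/-- The full context: a `PreCtx` together with the unique dual partner of `T` and
the fact that the apex `v` lies only on `T`. -/
structure Ctx (F : Finset (Finset V)) (T gf : Finset V) (v a b : V) : Prop where
  pre : PreCtx F T v a b
  hgF : gf ∈ F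
  hgT : gf ≠ T
  hgab : ({a, b} : Finset V) ⊆ gf
  hfab : facesOn F {a, b} = {T, gf}
  honly : ∀ h ∈ F, v ∈ h → h = T

lemma two_le_card_of_short (hF : IsDisk F) (hTF : T ∈ F)
    (hshort : (faceEdges T ∩ bdryEdges F).card = 2) : 1 < F.card := by
  by_contra h
  push_neg at h
  have hFT : F = {T} := by
    apply Finset.eq_singleton_iff_unique_mem.2
    exact ⟨hTF, fun x hx => by
      by_contra hne
      have := Finset.one_lt_card.2 ⟨x, hx, T, hTF, hne⟩
      omega⟩
  rw [hFT, bdryEdges_singleton, Finset.inter_self, card_faceEdges (hF.2.1 T hTF)] at hshort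
  omega

lemma exists_neighbor (hI : IsDisk I) (hTI : T ∈ I) (hcard : 1 < I.card) :
    ∃ h ∈ I, h ≠ T ∧ (h ∩ T).card = 2 := by
  obtain ⟨x, hx, hxT⟩ := Finset.exists_mem_ne hcard T
  have hne : (⟨T, hTI⟩ : {f // f ∈ I}) ≠ ⟨x, hx⟩ := by
    intro h
    exact hxT (congrArg Subtype.val h).symm
  obtain ⟨y, hy⟩ := exists_adj_of_connected hI.2.2.1 hne
  refine ⟨y.1, y.2, ?_, ?_⟩
  · intro h
    exact hy.1 (Subtype.ext h.symm)
  · rw [Finset.inter_comm]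
    exact hy.2

lemma exists_preCtx (hF : IsDisk F) (hTF : T ∈ F)
    (hshort : (faceEdges T ∩ bdryEdges F).card = 2) :
    ∃ v a b, PreCtx F T v a b ∧ ({a, b} : Finset V) ∉ bdryEdges F := by
  obtain ⟨x, y, z, hxy, hxz, hyz, hT⟩ := Finset.card_eq_three.1 (hF.2.1 T hTF)
  have e1 : ({x, y} : Finset V) ≠ {x, z} := by
    intro h
    have : y ∈ ({x, z} : Finset V) := by rw [← h]; simp
    simp at this; tauto
  have e2 : ({x, y} : Finset V) ≠ {y, z} := by
    intro h
    have : x ∈ ({y, z} : Finset V) := by rw [← h]; simp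
    simp at this; tauto
  have e3 : ({x, z} : Finset V) ≠ {y, z} := by
    intro h
    have : x ∈ ({y, z} : Finset V) := by rw [← h]; simp
    simp at this; tauto
  rw [← Finset.filter_mem_eq_inter, hT, faceEdges_triple hxy hxz hyz,
    Finset.filter_insert, Finset.filter_insert, Finset.filter_singleton] at hshort
  by_cases h1 : ({x, y} : Finset V) ∈ bdryEdges F <;>
    by_cases h2 : ({x, z} : Finset V) ∈ bdryEdges F <;>
    by_cases h3 : ({y, z} : Finset V) ∈ bdryEdges F <;>
    simp only [h1, h2, h3, if_true, if_false] at hshort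
  · -- all three: card 3
    exfalso
    rw [Finset.card_insert_of_notMem (by simp [e1, e2]),
      Finset.card_pair e3] at hshort
    omega
  · -- {x,y},{x,z} bd, {y,z} not: apex x
    exact ⟨x, y, z, ⟨hTF, hxy, hxz, hyz, hT, h1, h2⟩, h3⟩
  · -- {x,y},{y,z} bd: apex y
    refine ⟨y, x, z, ⟨hTF, Ne.symm hxy, hyz, hxz, by rw [hT]; ext t; simp; tauto,
      by rwa [Finset.pair_comm], h3⟩, h2⟩
  · exfalso
    simp at hshort
  · -- {x,z},{y,z} bd: apex z
    refine ⟨z, x, y, ⟨hTF, Ne.symm hxz, Ne.symm hyz, hxy, by rw [hT]; ext t; simp; tauto,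
      by rwa [Finset.pair_comm], by rwa [Finset.pair_comm]⟩, h1⟩
  · exfalso
    simp at hshort
  · exfalso
    simp at hshort
  · exfalso
    simp at hshort
end Core2

section Core3

variable {F I : Finset (Finset V)} {T gf : Finset V} {v a b : V}

lemma e3_mem_edgs (p : PreCtx F T v a b) : ({a, b} : Finset V) ∈ edgs F :=
  mem_edgs.2 ⟨T, p.hTF, p.e3_subset, Finset.card_pair p.hab⟩

lemma exists_partner (hF : IsDisk F) (p : PreCtx F T v a b) (hm : 1 < F.card) :
    ∃ gf, gf ∈ F ∧ gf ≠ T ∧ ({a, b} : Finset V) ⊆ gf ∧ facesOn F {a, b} = {T, gf} := by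
  obtain ⟨h, hhF, hhT, hcard⟩ := exists_neighbor hF p.hTF hm
  have hsub : h ∩ T ⊆ T := Finset.inter_subset_right
  rcases p.sub_edges hsub hcard with he | he | he
  · exfalso
    have : h ∈ facesOn F (h ∩ T) := mem_facesOn.2 ⟨hhF, Finset.inter_subset_left⟩
    rw [he, p.facesOn_e1] at this
    exact hhT (Finset.mem_singleton.1 this)
  · exfalso
    have : h ∈ facesOn F (h ∩ T) := mem_facesOn.2 ⟨hhF, Finset.inter_subset_left⟩
    rw [he, p.facesOn_e2] at this
    exact hhT (Finset.mem_singleton.1 this)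
  · have hab_h : ({a, b} : Finset V) ⊆ h := by
      rw [← he]; exact Finset.inter_subset_left
    refine ⟨h, hhF, hhT, hab_h, ?_⟩
    refine (Finset.eq_of_subset_of_card_le ?_ ?_).symm
    · intro t ht
      simp only [Finset.mem_insert, Finset.mem_singleton] at ht
      rcases ht with rfl | rfl
      · exact mem_facesOn.2 ⟨p.hTF, p.e3_subset⟩
      · exact mem_facesOn.2 ⟨hhF, hab_h⟩
    · rw [Finset.card_pair (Ne.symm hhT)]
      exact hF.2.2.2.1 _ (e3_mem_edgs p)

/-- Lemma C: the apex `v` lies on no face other than `T`. -/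
lemma apex_only (hF : IsDisk F) (p : PreCtx F T v a b)
    (hgF : gf ∈ F) (hgT : gf ≠ T) (hgab : ({a, b} : Finset V) ⊆ gf)
    (hfab : facesOn F {a, b} = {T, gf}) :
    ∀ h ∈ F, v ∈ h → h = T := by
  by_contra hcon
  push_neg at hcon
  obtain ⟨h, hhF, hhv, hhT⟩ := hcon
  set G := F.erase T with hG
  have hgG : gf ∈ G := Finset.mem_erase.2 ⟨hgT, hgF⟩
  have hhG : h ∈ G := Finset.mem_erase.2 ⟨hhT, hhF⟩
  -- every face sharing an edge with T is gf
  have huniq : ∀ x ∈ F, x ≠ T → (x ∩ T).card = 2 → x = gf := by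
    intro x hxF hxT hcard
    have hsub : x ∩ T ⊆ T := Finset.inter_subset_right
    rcases p.sub_edges hsub hcard with he | he | he
    · exfalso
      have : x ∈ facesOn F (x ∩ T) := mem_facesOn.2 ⟨hxF, Finset.inter_subset_left⟩
      rw [he, p.facesOn_e1] at this
      exact hxT (Finset.mem_singleton.1 this)
    · exfalso
      have : x ∈ facesOn F (x ∩ T) := mem_facesOn.2 ⟨hxF, Finset.inter_subset_left⟩
      rw [he, p.facesOn_e2] at this
      exact hxT (Finset.mem_singleton.1 this)
    · have : x ∈ facesOn F (x ∩ T) := mem_facesOn.2 ⟨hxF, Finset.inter_subset_left⟩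
      rw [he, hfab] at this
      simp at this
      tauto
  -- edges of G
  have hedgsG : edgs G = ((edgs F).erase {v, a}).erase {v, b} := by
    ext e
    constructor
    · intro he
      obtain ⟨f, hfG, hef, hc⟩ := mem_edgs.1 he
      have hfF : f ∈ F := Finset.mem_of_mem_erase hfG
      have hfT : f ≠ T := Finset.ne_of_mem_erase hfG
      have heF : e ∈ edgs F := mem_edgs.2 ⟨f, hfF, hef, hc⟩
      refine Finset.mem_erase.2 ⟨?_, Finset.mem_erase.2 ⟨?_, heF⟩⟩
      · intro hee
        have : f ∈ facesOn F {v, b} := mem_facesOn.2 ⟨hfF, hee ▸ hef⟩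
        rw [p.facesOn_e2] at this
        exact hfT (Finset.mem_singleton.1 this)
      · intro hee
        have : f ∈ facesOn F {v, a} := mem_facesOn.2 ⟨hfF, hee ▸ hef⟩
        rw [p.facesOn_e1] at this
        exact hfT (Finset.mem_singleton.1 this)
    · intro he
      have he2 := Finset.mem_of_mem_erase (Finset.mem_of_mem_erase he)
      have hne2 : e ≠ ({v, b} : Finset V) := Finset.ne_of_mem_erase he
      have hne1 : e ≠ ({v, a} : Finset V) := Finset.ne_of_mem_erase (Finset.mem_of_mem_erase he)
      obtain ⟨f, hfF, hef, hc⟩ := mem_edgs.1 he2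
      by_cases hfT : f = T
      · subst hfT
        rcases p.sub_edges hef hc with h' | h' | h'
        · exact absurd h' hne1
        · exact absurd h' hne2
        · exact mem_edgs.2 ⟨gf, hgG, h' ▸ hgab, hc⟩
      · exact mem_edgs.2 ⟨f, Finset.mem_erase.2 ⟨hfT, hfF⟩, hef, hc⟩
  -- vertices of G
  have hvertsG : verts G = verts F := by
    apply Finset.Subset.antisymm
    · exact Finset.biUnion_subset_biUnion_of_subset_left _ (Finset.erase_subset _ _)
    · intro w hw
      obtain ⟨f, hfF, hwf⟩ := mem_verts.1 hw
      by_cases hfT : f = T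
      · subst hfT
        rw [p.hT] at hwf
        simp only [Finset.mem_insert, Finset.mem_singleton] at hwf
        rcases hwf with rfl | rfl | rfl
        · exact mem_verts.2 ⟨h, hhG, hhv⟩
        · exact mem_verts.2 ⟨gf, hgG, hgab (by simp)⟩
        · exact mem_verts.2 ⟨gf, hgG, hgab (by simp)⟩
      · exact mem_verts.2 ⟨f, Finset.mem_erase.2 ⟨hfT, hfF⟩, hwf⟩
  -- G is dually connected
  have hconnG : (dualGraph G).Connected := by
    refine dual_connected_erase hF.2.2.1 p.hTF ?_ ⟨gf, hgG⟩
    intro x y hx hy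
    have hx' : x.1 = gf := huniq x.1 x.2 (fun hh => hx.1 (Subtype.ext hh)) hx.2
    have hy' : y.1 = gf := huniq y.1 y.2 (fun hh => hy.1 (Subtype.ext hh)) hy.2
    exact Subtype.ext (hx'.trans hy'.symm)
  -- G has a boundary edge
  have hbdG : ∃ e ∈ edgs G, (facesOn G e).card = 1 := by
    refine ⟨{a, b}, mem_edgs.2 ⟨gf, hgG, hgab, Finset.card_pair p.hab⟩, ?_⟩
    have : facesOn G {a, b} = (facesOn F {a, b}).erase T := by
      rw [facesOn, facesOn, hG, Finset.filter_erase]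
    rw [this, hfab]
    rw [show ({T, gf} : Finset (Finset V)) = insert T {gf} from rfl,
      Finset.erase_insert (by simpa using Ne.symm hgT)]
    simp
  -- apply the Euler bound to G
  have hchi := card_add_verts_le ⟨gf, hgG⟩
    (fun f hf => hF.2.1 f (Finset.mem_of_mem_erase hf))
    (fun e he => by
      have heF : e ∈ edgs F := edgs_subset (Finset.erase_subset _ _) he
      calc (facesOn G e).card ≤ (facesOn F e).card :=
            Finset.card_le_card (facesOn_subset (Finset.erase_subset _ _) e)
        _ ≤ 2 := hF.2.2.2.1 e heF)
    hconnG hbdG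
  -- cardinalities
  have hcardG : G.card = F.card - 1 := Finset.card_erase_of_mem p.hTF
  have he1F : ({v, a} : Finset V) ∈ edgs F :=
    mem_edgs.2 ⟨T, p.hTF, p.e1_subset, Finset.card_pair p.hva⟩
  have he2F : ({v, b} : Finset V) ∈ edgs F :=
    mem_edgs.2 ⟨T, p.hTF, p.e2_subset, Finset.card_pair p.hvb⟩
  have he2F' : ({v, b} : Finset V) ∈ (edgs F).erase {v, a} :=
    Finset.mem_erase.2 ⟨Ne.symm p.e1_ne_e2, he2F⟩
  have hcardE : (edgs G).card = (edgs F).card - 2 := by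
    rw [hedgsG, Finset.card_erase_of_mem he2F', Finset.card_erase_of_mem he1F]
    omega
  have hEpos : 1 ≤ (edgs F).card := Finset.card_pos.2 ⟨_, he1F⟩
  have hEpos2 : 2 ≤ (edgs F).card := by
    have : ({({v, a} : Finset V), {v, b}} : Finset (Finset V)) ⊆ edgs F := by
      intro t ht; simp at ht; rcases ht with rfl | rfl <;> assumption
    have := Finset.card_le_card this
    rwa [Finset.card_pair p.e1_ne_e2] at this
  have hFpos : 1 ≤ F.card := Finset.card_pos.2 ⟨T, p.hTF⟩
  have hEuler : ((verts F).card : ℤ) - (edgs F).card + F.card = 1 := hF.2.2.2.2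
  rw [hcardG, hvertsG, hcardE] at hchi
  omega

lemma exists_ctx (hF : IsDisk F) (hTF : T ∈ F)
    (hshort : (faceEdges T ∩ bdryEdges F).card = 2) :
    ∃ v a b gf, Ctx F T gf v a b := by
  obtain ⟨v, a, b, p, _⟩ := exists_preCtx hF hTF hshort
  obtain ⟨gf, hgF, hgT, hgab, hfab⟩ :=
    exists_partner hF p (two_le_card_of_short hF hTF hshort)
  exact ⟨v, a, b, gf, ⟨p, hgF, hgT, hgab, hfab, apex_only hF p hgF hgT hgab hfab⟩⟩

end Core3

section Core4

variable {F I : Finset (Finset V)} {T gf : Finset V} {v a b : V}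

namespace Ctx

lemma adj_eq_partner (c : Ctx F T gf v a b) {h : Finset V} (hh : h ∈ F) (hne : h ≠ T)
    (hcard : (h ∩ T).card = 2) : h = gf := by
  have hsub : h ∩ T ⊆ T := Finset.inter_subset_right
  have hmem : h ∈ facesOn F (h ∩ T) := mem_facesOn.2 ⟨hh, Finset.inter_subset_left⟩
  rcases c.pre.sub_edges hsub hcard with he | he | he
  · rw [he, c.pre.facesOn_e1] at hmem
    exact absurd (Finset.mem_singleton.1 hmem) hne
  · rw [he, c.pre.facesOn_e2] at hmem
    exact absurd (Finset.mem_singleton.1 hmem) hne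
  · rw [he, c.hfab] at hmem
    simp at hmem
    tauto

lemma edge_at_v (c : Ctx F T gf v a b) {e : Finset V} (he : e ∈ edgs F) (hv : v ∈ e) :
    e = {v, a} ∨ e = {v, b} := by
  obtain ⟨f, hf, hef, hc⟩ := mem_edgs.1 he
  have hfT : f = T := c.honly f hf (hef hv)
  subst hfT
  rcases c.pre.sub_edges hef hc with h | h | h
  · exact Or.inl h
  · exact Or.inr h
  · exfalso
    rw [h] at hv
    simp at hv
    rcases hv with h' | h'
    · exact c.pre.hva h'
    · exact c.pre.hvb h'

lemma partner_mem (c : Ctx F T gf v a b) (hIF : I ⊆ F) (hTI : T ∈ I)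
    (hI : IsDisk I) (hm : 1 < I.card) : gf ∈ I := by
  obtain ⟨h, hhI, hhT, hcard⟩ := exists_neighbor hI hTI hm
  have := c.adj_eq_partner (hIF hhI) hhT hcard
  rwa [← this]

lemma edgs_erase (c : Ctx F T gf v a b) (hIF : I ⊆ F) (hTI : T ∈ I) (hgI : gf ∈ I) :
    edgs (I.erase T) = ((edgs I).erase {v, a}).erase {v, b} := by
  have hgG : gf ∈ I.erase T := Finset.mem_erase.2 ⟨c.hgT, hgI⟩
  ext e
  constructor
  · intro he
    obtain ⟨f, hfG, hef, hc⟩ := mem_edgs.1 he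
    have hfI : f ∈ I := Finset.mem_of_mem_erase hfG
    have hfT : f ≠ T := Finset.ne_of_mem_erase hfG
    have heI : e ∈ edgs I := mem_edgs.2 ⟨f, hfI, hef, hc⟩
    refine Finset.mem_erase.2 ⟨?_, Finset.mem_erase.2 ⟨?_, heI⟩⟩
    · intro hee
      have : f ∈ facesOn F {v, b} := mem_facesOn.2 ⟨hIF hfI, hee ▸ hef⟩
      rw [c.pre.facesOn_e2] at this
      exact hfT (Finset.mem_singleton.1 this)
    · intro hee
      have : f ∈ facesOn F {v, a} := mem_facesOn.2 ⟨hIF hfI, hee ▸ hef⟩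
      rw [c.pre.facesOn_e1] at this
      exact hfT (Finset.mem_singleton.1 this)
  · intro he
    have he2 := Finset.mem_of_mem_erase (Finset.mem_of_mem_erase he)
    have hne2 : e ≠ ({v, b} : Finset V) := Finset.ne_of_mem_erase he
    have hne1 : e ≠ ({v, a} : Finset V) := Finset.ne_of_mem_erase (Finset.mem_of_mem_erase he)
    obtain ⟨f, hfI, hef, hc⟩ := mem_edgs.1 he2
    by_cases hfT : f = T
    · subst hfT
      rcases c.pre.sub_edges hef hc with h' | h' | h'
      · exact absurd h' hne1
      · exact absurd h' hne2
      · exact mem_edgs.2 ⟨gf, hgG, h' ▸ c.hgab, hc⟩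
    · exact mem_edgs.2 ⟨f, Finset.mem_erase.2 ⟨hfT, hfI⟩, hef, hc⟩

lemma verts_erase (c : Ctx F T gf v a b) (hIF : I ⊆ F) (hTI : T ∈ I) (hgI : gf ∈ I) :
    verts (I.erase T) = (verts I).erase v := by
  have hgG : gf ∈ I.erase T := Finset.mem_erase.2 ⟨c.hgT, hgI⟩
  ext w
  constructor
  · intro hw
    obtain ⟨f, hfG, hwf⟩ := mem_verts.1 hw
    refine Finset.mem_erase.2 ⟨?_, mem_verts.2 ⟨f, Finset.mem_of_mem_erase hfG, hwf⟩⟩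
    rintro rfl
    exact Finset.ne_of_mem_erase hfG
      (c.honly f (hIF (Finset.mem_of_mem_erase hfG)) hwf)
  · intro hw
    obtain ⟨hwv, hw'⟩ := Finset.mem_erase.1 hw
    obtain ⟨f, hfI, hwf⟩ := mem_verts.1 hw'
    by_cases hfT : f = T
    · subst hfT
      rw [c.pre.hT] at hwf
      simp only [Finset.mem_insert, Finset.mem_singleton] at hwf
      rcases hwf with rfl | rfl | rfl
      · exact absurd rfl hwv
      · exact mem_verts.2 ⟨gf, hgG, c.hgab (by simp)⟩
      · exact mem_verts.2 ⟨gf, hgG, c.hgab (by simp)⟩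
    · exact mem_verts.2 ⟨f, Finset.mem_erase.2 ⟨hfT, hfI⟩, hwf⟩

lemma facesOn_e3_sub (c : Ctx F T gf v a b) (hIF : I ⊆ F) (hTI : T ∈ I) (hgI : gf ∈ I) :
    facesOn I {a, b} = {T, gf} := by
  ext t
  constructor
  · intro ht
    have := facesOn_subset hIF ({a, b} : Finset V) ht
    rw [c.hfab] at this
    exact this
  · intro ht
    simp only [Finset.mem_insert, Finset.mem_singleton] at ht
    rcases ht with rfl | rfl
    · exact mem_facesOn.2 ⟨hTI, c.pre.e3_subset⟩
    · exact mem_facesOn.2 ⟨hgI, c.hgab⟩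

lemma e1_mem_bdry (c : Ctx F T gf v a b) (hIF : I ⊆ F) (hTI : T ∈ I) :
    ({v, a} : Finset V) ∈ bdryEdges I := by
  refine Finset.mem_filter.2 ⟨mem_edgs.2 ⟨T, hTI, c.pre.e1_subset, Finset.card_pair c.pre.hva⟩, ?_⟩
  have h1 : facesOn I {v, a} ⊆ {T} := by
    rw [← c.pre.facesOn_e1]
    exact facesOn_subset hIF _
  have h2 : T ∈ facesOn I {v, a} := mem_facesOn.2 ⟨hTI, c.pre.e1_subset⟩
  have : facesOn I {v, a} = {T} :=
    Finset.Subset.antisymm h1 (Finset.singleton_subset_iff.2 h2)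
  rw [this, Finset.card_singleton]

lemma e2_mem_bdry (c : Ctx F T gf v a b) (hIF : I ⊆ F) (hTI : T ∈ I) :
    ({v, b} : Finset V) ∈ bdryEdges I := by
  refine Finset.mem_filter.2 ⟨mem_edgs.2 ⟨T, hTI, c.pre.e2_subset, Finset.card_pair c.pre.hvb⟩, ?_⟩
  have h1 : facesOn I {v, b} ⊆ {T} := by
    rw [← c.pre.facesOn_e2]
    exact facesOn_subset hIF _
  have h2 : T ∈ facesOn I {v, b} := mem_facesOn.2 ⟨hTI, c.pre.e2_subset⟩
  have : facesOn I {v, b} = {T} :=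
    Finset.Subset.antisymm h1 (Finset.singleton_subset_iff.2 h2)
  rw [this, Finset.card_singleton]

lemma bdryEdges_erase (c : Ctx F T gf v a b) (hIF : I ⊆ F) (hTI : T ∈ I) (hgI : gf ∈ I) :
    bdryEdges (I.erase T) = insert {a, b} (((bdryEdges I).erase {v, a}).erase {v, b}) := by
  have hgG : gf ∈ I.erase T := Finset.mem_erase.2 ⟨c.hgT, hgI⟩
  have hfo : ∀ e : Finset V, facesOn (I.erase T) e = (facesOn I e).erase T := by
    intro e
    rw [facesOn, facesOn, Finset.filter_erase]
  ext e
  by_cases he3 : e = ({a, b} : Finset V)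
  · subst he3
    simp only [Finset.mem_insert, true_or, iff_true]
    refine Finset.mem_filter.2 ⟨mem_edgs.2 ⟨gf, hgG, c.hgab, Finset.card_pair c.pre.hab⟩, ?_⟩
    rw [hfo, c.facesOn_e3_sub hIF hTI hgI,
      show ({T, gf} : Finset (Finset V)) = insert T {gf} from rfl,
      Finset.erase_insert (by simpa using Ne.symm c.hgT)]
    simp
  · by_cases he1 : e = ({v, a} : Finset V)
    · subst he1
      constructor
      · intro hmem
        exfalso
        have := (Finset.mem_filter.1 hmem).1
        rw [c.edgs_erase hIF hTI hgI] at this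
        exact Finset.ne_of_mem_erase (Finset.mem_of_mem_erase this) rfl
      · intro hmem
        exfalso
        simp only [Finset.mem_insert] at hmem
        rcases hmem with h | h
        · exact he3 h
        · exact Finset.ne_of_mem_erase (Finset.mem_of_mem_erase h) rfl
    · by_cases he2 : e = ({v, b} : Finset V)
      · subst he2
        constructor
        · intro hmem
          exfalso
          have := (Finset.mem_filter.1 hmem).1
          rw [c.edgs_erase hIF hTI hgI] at this
          exact Finset.ne_of_mem_erase this rfl
        · intro hmem
          exfalso
          simp only [Finset.mem_insert] at hmem
          rcases hmem with h | h
          · exact he3 h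
          · exact Finset.ne_of_mem_erase h rfl
      · -- e is none of the three edges of T
        have hTnot : ∀ he' : e ∈ edgs I, T ∉ facesOn I e := by
          intro he' hTf
          have hsub : e ⊆ T := (mem_facesOn.1 hTf).2
          rcases c.pre.sub_edges hsub (card_of_mem_edgs he') with h | h | h
          · exact he1 h
          · exact he2 h
          · exact he3 h
        constructor
        · intro hmem
          obtain ⟨hedge, hcard⟩ := Finset.mem_filter.1 hmem
          have heI : e ∈ edgs I := by
            rw [c.edgs_erase hIF hTI hgI] at hedge
            exact Finset.mem_of_mem_erase (Finset.mem_of_mem_erase hedge)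
          rw [hfo, Finset.erase_eq_of_notMem (hTnot heI)] at hcard
          exact Finset.mem_insert.2 (Or.inr (Finset.mem_erase.2 ⟨he2,
            Finset.mem_erase.2 ⟨he1, Finset.mem_filter.2 ⟨heI, hcard⟩⟩⟩))
        · intro hmem
          simp only [Finset.mem_insert] at hmem
          rcases hmem with h | h
          · exact absurd h he3
          · obtain ⟨_, h'⟩ := Finset.mem_erase.1 h
            obtain ⟨_, h''⟩ := Finset.mem_erase.1 h'
            obtain ⟨heI, hcard⟩ := Finset.mem_filter.1 h''
            refine Finset.mem_filter.2 ⟨?_, ?_⟩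
            · rw [c.edgs_erase hIF hTI hgI]
              exact Finset.mem_erase.2 ⟨he2, Finset.mem_erase.2 ⟨he1, heI⟩⟩
            · rw [hfo, Finset.erase_eq_of_notMem (hTnot heI)]
              exact hcard

lemma bdryVerts_erase (c : Ctx F T gf v a b) (hIF : I ⊆ F) (hTI : T ∈ I) (hgI : gf ∈ I) :
    bdryVerts (I.erase T) = (bdryVerts I).erase v := by
  ext w
  constructor
  · intro hw
    obtain ⟨e, he, hwe⟩ := Finset.mem_biUnion.1 hw
    rw [c.bdryEdges_erase hIF hTI hgI] at he
    simp only [Finset.mem_insert] at he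
    rcases he with rfl | he
    · -- e = {a,b}
      have hwe' : w = a ∨ w = b := by simpa using hwe
      rcases hwe' with h | h
      · refine Finset.mem_erase.2 ⟨?_, Finset.mem_biUnion.2 ⟨{v, a}, c.e1_mem_bdry hIF hTI, ?_⟩⟩
        · rw [h]; exact Ne.symm c.pre.hva
        · rw [h]; simp
      · refine Finset.mem_erase.2 ⟨?_, Finset.mem_biUnion.2 ⟨{v, b}, c.e2_mem_bdry hIF hTI, ?_⟩⟩
        · rw [h]; exact Ne.symm c.pre.hvb
        · rw [h]; simp
    · obtain ⟨hne2, he'⟩ := Finset.mem_erase.1 he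
      obtain ⟨hne1, he''⟩ := Finset.mem_erase.1 he'
      refine Finset.mem_erase.2 ⟨?_, Finset.mem_biUnion.2 ⟨e, he'', hwe⟩⟩
      rintro rfl
      have heI : e ∈ edgs I := (Finset.mem_filter.1 he'').1
      have heF : e ∈ edgs F := edgs_subset hIF heI
      rcases c.edge_at_v heF hwe with h | h
      · exact hne1 h
      · exact hne2 h
  · intro hw
    obtain ⟨hwv, hw'⟩ := Finset.mem_erase.1 hw
    obtain ⟨e, he, hwe⟩ := Finset.mem_biUnion.1 hw'
    have hbde := c.bdryEdges_erase hIF hTI hgI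
    by_cases he1 : e = ({v, a} : Finset V)
    · have hwa : w = a := by
        rw [he1] at hwe
        have : w = v ∨ w = a := by simpa using hwe
        tauto
      refine Finset.mem_biUnion.2 ⟨{a, b}, by
        rw [hbde]; exact Finset.mem_insert_self _ _, ?_⟩
      rw [hwa]; simp
    · by_cases he2 : e = ({v, b} : Finset V)
      · have hwb : w = b := by
          rw [he2] at hwe
          have : w = v ∨ w = b := by simpa using hwe
          tauto
        refine Finset.mem_biUnion.2 ⟨{a, b}, by
          rw [hbde]; exact Finset.mem_insert_self _ _, ?_⟩
        rw [hwb]; simp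
      · exact Finset.mem_biUnion.2 ⟨e, by
          rw [hbde]
          exact Finset.mem_insert.2 (Or.inr
            (Finset.mem_erase.2 ⟨he2, Finset.mem_erase.2 ⟨he1, he⟩⟩)), hwe⟩

lemma bdryLen_erase (c : Ctx F T gf v a b) (hIF : I ⊆ F) (hTI : T ∈ I) (hgI : gf ∈ I) :
    bdryLen I = bdryLen (I.erase T) + 1 := by
  have hv : v ∈ bdryVerts I :=
    Finset.mem_biUnion.2 ⟨{v, a}, c.e1_mem_bdry hIF hTI, by simp⟩
  rw [bdryLen, bdryLen, c.bdryVerts_erase hIF hTI hgI, Finset.card_erase_of_mem hv]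
  have : 1 ≤ (bdryVerts I).card := Finset.card_pos.2 ⟨v, hv⟩
  omega

lemma disk_erase (c : Ctx F T gf v a b) (hIF : I ⊆ F) (hTI : T ∈ I)
    (hI : IsDisk I) (hm : 1 < I.card) : IsDisk (I.erase T) := by
  have hgI : gf ∈ I := c.partner_mem hIF hTI hI hm
  have hgG : gf ∈ I.erase T := Finset.mem_erase.2 ⟨c.hgT, hgI⟩
  refine ⟨⟨gf, hgG⟩, fun f hf => hI.2.1 f (Finset.mem_of_mem_erase hf), ?_, ?_, ?_⟩
  · refine dual_connected_erase hI.2.2.1 hTI ?_ ⟨gf, hgG⟩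
    intro x y hx hy
    have hx' : x.1 = gf := c.adj_eq_partner (hIF x.2) (fun hh => hx.1 (Subtype.ext hh)) hx.2
    have hy' : y.1 = gf := c.adj_eq_partner (hIF y.2) (fun hh => hy.1 (Subtype.ext hh)) hy.2
    exact Subtype.ext (hx'.trans hy'.symm)
  · intro e he
    have heI : e ∈ edgs I := edgs_subset (Finset.erase_subset _ _) he
    calc (facesOn (I.erase T) e).card ≤ (facesOn I e).card :=
          Finset.card_le_card (facesOn_subset (Finset.erase_subset _ _) e)
      _ ≤ 2 := hI.2.2.2.1 e heI
  · have he1I : ({v, a} : Finset V) ∈ edgs I :=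
      mem_edgs.2 ⟨T, hTI, c.pre.e1_subset, Finset.card_pair c.pre.hva⟩
    have he2I : ({v, b} : Finset V) ∈ (edgs I).erase {v, a} :=
      Finset.mem_erase.2 ⟨Ne.symm c.pre.e1_ne_e2,
        mem_edgs.2 ⟨T, hTI, c.pre.e2_subset, Finset.card_pair c.pre.hvb⟩⟩
    have hvI : v ∈ verts I := mem_verts.2 ⟨T, hTI, c.pre.vmem⟩
    have hE : (edgs (I.erase T)).card = (edgs I).card - 2 := by
      rw [c.edgs_erase hIF hTI hgI, Finset.card_erase_of_mem he2I,
        Finset.card_erase_of_mem he1I]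
      omega
    have hV : (verts (I.erase T)).card = (verts I).card - 1 := by
      rw [c.verts_erase hIF hTI hgI, Finset.card_erase_of_mem hvI]
    have hC : (I.erase T).card = I.card - 1 := Finset.card_erase_of_mem hTI
    have hE2 : 2 ≤ (edgs I).card := by
      have hsub : ({({v, a} : Finset V), {v, b}} : Finset (Finset V)) ⊆ edgs I := by
        intro t ht; simp at ht
        rcases ht with rfl | rfl
        · exact he1I
        · exact Finset.mem_of_mem_erase he2I
      have := Finset.card_le_card hsub
      rwa [Finset.card_pair c.pre.e1_ne_e2] at this
    have hV1 : 1 ≤ (verts I).card := Finset.card_pos.2 ⟨v, hvI⟩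
    have hEuler : ((verts I).card : ℤ) - (edgs I).card + I.card = 1 := hI.2.2.2.2
    rw [hE, hV, hC]
    omega

end Ctx

end Core4

section ListHelpers

lemma mem_maxIndices {L : List (Finset V)} {j : ℕ} :
    j ∈ maxIndices L ↔ j < L.length ∧ LocalMaxAt L j := by
  simp [maxIndices, List.mem_filter, List.mem_range]

lemma pairwise_maxIndices (L : List (Finset V)) : (maxIndices L).Pairwise (· < ·) :=
  List.pairwise_lt_range.filter _

lemma seq_zero (M : List (Finset V)) : seq M 0 = 0 := by
  simp [seq, bdryLen, bdryVerts, bdryEdges, edgs]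
  rfl

lemma seq_one {M : List (Finset V)} (hM : M ≠ []) (h3 : ∀ f ∈ M, f.card = 3) :
    seq M 1 = 3 := by
  cases M with
  | nil => exact absurd rfl hM
  | cons x xs =>
    rw [seq, show (x :: xs).take 1 = [x] from rfl,
      show ([x] : List (Finset V)).toFinset = {x} by simp,
      bdryLen_singleton (h3 x (by simp))]

end ListHelpers

end TriSphere

open TriSphere in
/-- reordering principle: If `∂D` has a shortening move across the `i`-th
triangle of a good ordering of a triangulated disk `D`, then moving that triangle to the
end of the ordering yields another good ordering whose width is no larger (so each local
maximum is unchanged or reduced: the new width is lexicographically at most the old). -/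
theorem reordering_principle {V : Type} [Fintype V] [DecidableEq V]
    (F : Finset (Finset V)) (L : List (Finset V)) (hF : IsDisk F) (hL : Good F L)
    (i : ℕ) (hi : i < L.length)
    (hshort : (faceEdges (L.get ⟨i, hi⟩) ∩ bdryEdges F).card = 2) :
    Good F (L.eraseIdx i ++ [L.get ⟨i, hi⟩]) ∧
      ¬ List.Lex (· < ·) (widthList L) (widthList (L.eraseIdx i ++ [L.get ⟨i, hi⟩])) := by
    classical
  set T := L.get ⟨i, hi⟩ with hTdef
  set m := L.length with hm
  set L' := L.eraseIdx i ++ [T] with hL'def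
  have hTL : T ∈ L := List.get_mem L ⟨i, hi⟩
  have hndL : L.Nodup := hL.1
  have hTF : T ∈ F := by rw [← hL.2.1]; exact List.mem_toFinset.2 hTL
  obtain ⟨v, a, b, gf, c⟩ := exists_ctx hF hTF hshort
  set P := L.take i with hP
  set Q := L.drop (i + 1) with hQ
  have him : i < m := hi
  have hPlen : P.length = i := by rw [hP, List.length_take]; omega
  have hQlen : Q.length = m - (i + 1) := by rw [hQ, List.length_drop]
  have hsplit : L = P ++ T :: Q := by
    rw [hP, hQ, hTdef]
    conv_lhs => rw [← List.take_append_drop i L]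
    congr 1
    rw [List.get_eq_getElem]
    exact List.drop_eq_getElem_cons hi
  have hE : L.eraseIdx i = P ++ Q := List.eraseIdx_eq_take_drop_succ L i
  have hnd : (P ++ T :: Q).Nodup := by rw [← hsplit]; exact hndL
  have hTP : T ∉ P := fun hTP =>
    List.disjoint_of_nodup_append hnd hTP List.mem_cons_self
  have hTQ : T ∉ Q := (List.nodup_cons.1 (List.nodup_append.1 hnd).2.1).1
  have hndE : (P ++ Q).Nodup := by
    rw [List.nodup_append]
    obtain ⟨h1, h2, h3⟩ := List.nodup_append.1 hnd
    exact ⟨h1, (List.nodup_cons.1 h2).2, fun x hx y hy hxy => h3 x hx y (List.mem_cons_of_mem _ hy) hxy⟩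
  have hndL' : L'.Nodup := by
    rw [hL'def, hE, List.nodup_append]
    refine ⟨hndE, List.nodup_singleton T, ?_⟩
    intro x hx y hx2 hxy
    rw [List.mem_singleton] at hx2
    subst hx2
    rw [hxy] at hx
    rcases List.mem_append.1 hx with h | h
    · exact hTP h
    · exact hTQ h
  have htoF : L'.toFinset = F := by
    rw [hL'def, hE, ← hL.2.1]
    conv_rhs => rw [hsplit]
    ext x
    simp [List.toFinset_append]
  have hlenE : (L.eraseIdx i).length = m - 1 := by
    rw [hE, List.length_append, hPlen, hQlen]; omega
  have hlenL' : L'.length = m := by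
    rw [hL'def, List.length_append, hlenE, List.length_singleton]; omega
  -- prefix identities
  have htakeL'_low : ∀ k, k ≤ i → L'.take k = L.take k := by
    intro k hk
    rw [hL'def, hE]
    rw [List.take_append, List.take_append]
    have h1 : List.take (k - P.length) Q = [] := by
      rw [hPlen, show k - i = 0 by omega]
      rfl
    have h2 : List.take (k - (P ++ Q).length) [T] = [] := by
      rw [List.length_append, hPlen, hQlen, show k - (i + (m - (i+1))) = 0 by omega]
      rfl
    rw [h1, h2, List.append_nil, List.append_nil, hP, List.take_take,
      show k ⊓ i = k by omega]
  have htakeE_high : ∀ k, i ≤ k → (L.eraseIdx i).take k = P ++ Q.take (k - i) := by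
    intro k hk
    rw [hE, List.take_append, hPlen,
      List.take_of_length_le (by rw [hPlen]; exact hk)]
  have htakeL_high : ∀ k, i ≤ k → L.take (k + 1) = P ++ T :: Q.take (k - i) := by
    intro k hk
    conv_lhs => rw [hsplit]
    rw [List.take_append,
      List.take_of_length_le (by rw [hPlen]; omega), hPlen,
      show k + 1 - i = (k - i) + 1 by omega, List.take_succ_cons]
  have htakeL'_mid : ∀ k, i ≤ k → k ≤ m - 1 →
      (L'.take k).toFinset = (L.take (k + 1)).toFinset.erase T := by
    intro k hk hk2
    rw [hL'def, List.take_append_of_le_length (by rw [hlenE]; exact hk2),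
      htakeE_high k hk, htakeL_high k hk]
    have hTQ' : T ∉ Q.take (k - i) := fun h => hTQ (List.mem_of_mem_take h)
    ext x
    simp only [List.toFinset_append, List.toFinset_cons, Finset.mem_union,
      Finset.mem_erase, Finset.mem_insert, List.mem_toFinset]
    constructor
    · rintro (hx | hx)
      · exact ⟨fun h => hTP (h ▸ hx), Or.inl hx⟩
      · exact ⟨fun h => hTQ' (h ▸ hx), Or.inr (Or.inr hx)⟩
    · rintro ⟨hne, hx | hx | hx⟩
      · exact Or.inl hx
      · exact absurd hx hne
      · exact Or.inr hx
  have htakeLm : L.take m = L := List.take_length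
  have htakeL'm : L'.take m = L' := by rw [← hlenL']; exact List.take_length
  -- disk facts
  have hdisk : ∀ k, 1 ≤ k → k ≤ m → IsDisk (L.take k).toFinset := by
    intro k h1 h2
    rcases eq_or_lt_of_le h2 with h | h
    · rw [h, htakeLm, hL.2.1]; exact hF
    · exact hL.2.2 k h1 h
  have hsubF : ∀ k, (L.take k).toFinset ⊆ F := by
    intro k x hx
    rw [← hL.2.1]
    exact List.mem_toFinset.2 (List.take_subset k L (List.mem_toFinset.1 hx))
  have hTmem : ∀ k, i ≤ k → T ∈ (L.take (k + 1)).toFinset := by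
    intro k hk
    rw [htakeL_high k hk]
    simp
  have hcardTake : ∀ k, k ≤ m → (L.take k).toFinset.card = k := by
    intro k hk
    rw [List.toFinset_card_of_nodup (hndL.sublist (List.take_sublist k L)),
      List.length_take]
    omega
  -- sequence identities
  have hseq_low : ∀ k, k ≤ i → seq L' k = seq L k := by
    intro k hk
    rw [seq, seq, htakeL'_low k hk]
  have hseq_high : ∀ k, 1 ≤ k → i ≤ k → k < m → seq L (k + 1) = seq L' k + 1 := by
    intro k h1 h2 h3
    have hI : IsDisk (L.take (k + 1)).toFinset := hdisk (k + 1) (by omega) (by omega)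
    have hTI := hTmem k h2
    have hgI := c.partner_mem (hsubF (k + 1)) hTI hI
      (by rw [hcardTake (k + 1) (by omega)]; omega)
    have hble := c.bdryLen_erase (hsubF (k + 1)) hTI hgI
    rw [seq, seq, htakeL'_mid k h2 (by omega)]
    exact hble
  have hseq_top : seq L' m = seq L m := by
    rw [seq, seq, htakeLm, htakeL'm, htoF, hL.2.1]
  have hm2 : 2 ≤ m := by
    have h2c := two_le_card_of_short hF hTF hshort
    rw [← hL.2.1, List.toFinset_card_of_nodup hndL] at h2c
    omega
  have hbdF : 1 ≤ seq L m := by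
    rw [seq, htakeLm, hL.2.1]
    refine Finset.card_pos.2 ⟨v, ?_⟩
    exact Finset.mem_biUnion.2 ⟨{v, a}, c.pre.hbd1, by simp⟩
  -- the good ordering
  have hGood : Good F L' := by
    refine ⟨hndL', htoF, ?_⟩
    intro k h1 h2
    rw [hlenL'] at h2
    by_cases hk : k ≤ i
    · rw [htakeL'_low k hk]
      exact hL.2.2 k h1 h2
    · push_neg at hk
      rw [htakeL'_mid k (by omega) (by omega)]
      exact c.disk_erase (hsubF (k + 1)) (hTmem k (by omega))
        (hdisk (k + 1) (by omega) (by omega))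
        (by rw [hcardTake (k + 1) (by omega)]; omega)
  refine ⟨hGood, ?_⟩
  -- the width comparison
  set φ : ℕ → ℕ := fun j => if j < i then j else j + 1 with hφ
  have hφmono : ∀ j k, j < k → φ j < φ k := by
    intro j k h
    simp only [hφ]
    split_ifs <;> omega
  have hall3 : ∀ f ∈ L, f.card = 3 := by
    intro f hf
    exact hF.2.1 f (by rw [← hL.2.1]; exact List.mem_toFinset.2 hf)
  have hall3' : ∀ f ∈ L', f.card = 3 := by
    intro f hf
    exact hF.2.1 f (by rw [← htoF]; exact List.mem_toFinset.2 hf)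
  have hkey : ∀ j, LocalMaxAt L' j → LocalMaxAt L (φ j) ∧ seq L' j ≤ seq L (φ j) := by
    intro j hj
    obtain ⟨hj1, hj2, hj3, hj4⟩ := hj
    rw [hlenL'] at hj2
    -- j = m-1 is impossible
    have hjm : j < m - 1 := by
      by_contra hcon
      push_neg at hcon
      have hjeq : j = m - 1 := by omega
      have hh := hseq_high (m - 1) (by omega) (by omega) (by omega)
      rw [show m - 1 + 1 = m by omega] at hh
      rw [hjeq, show m - 1 + 1 = m by omega, hseq_top] at hj4
      omega
    by_cases hcase : j < i
    · -- φ j = j, everything unchanged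
      have e0 : φ j = j := if_pos hcase
      rw [e0]
      have l1 := hseq_low (j - 1) (by omega)
      have l2 := hseq_low j (by omega)
      have l3 := hseq_low (j + 1) (by omega)
      refine ⟨⟨hj1, by omega, ?_, ?_⟩, by omega⟩
      · rw [← l1, ← l2]; exact hj3
      · rw [← l3, ← l2]; exact hj4
    · push_neg at hcase
      have e0 : φ j = j + 1 := if_neg (by omega)
      rw [e0]
      -- common right-hand facts
      have hr1 : seq L (j + 1) = seq L' j + 1 := hseq_high j (by omega) hcase (by omega)
      have hr2 : seq L (j + 2) = seq L' (j + 1) + 1 := by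
        have := hseq_high (j + 1) (by omega) (by omega) (by omega)
        rwa [show j + 1 + 1 = j + 2 by omega] at this
      have hright : seq L (j + 1 + 1) < seq L (j + 1) := by
        rw [show j + 1 + 1 = j + 2 by omega, hr1, hr2]
        omega
      have hbound : j + 1 < m := by omega
      -- left-hand side by cases
      rcases eq_or_lt_of_le hcase with hji | hji
      · -- j = i
        rcases Nat.eq_zero_or_pos i with hi0 | hi0
        · -- i = 0, j = 0: impossible since 1 ≤ j
          omega
        · -- i ≥ 1, j = i
          have hleft : seq L (j + 1 - 1) < seq L (j + 1) := by
            rw [show j + 1 - 1 = j by omega, hr1, ← hseq_low j (by omega)]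
            omega
          exact ⟨⟨by omega, hbound, hleft, hright⟩, by omega⟩
      · -- j > i
        rcases Nat.lt_or_ge (j - 1) (max i 1) with hjl | hjl
        · -- j - 1 < max i 1
          rcases Nat.eq_zero_or_pos i with hi0 | hi0
          · -- i = 0, j = 1
            have hj1' : j = 1 := by omega
            subst hj1'
            have hs1 : seq L' 1 = 3 := by
              refine seq_one ?_ hall3'
              intro hnil
              rw [hnil] at hlenL'
              simp at hlenL'
              omega
            have hs2 : seq L 1 = 3 := by
              refine seq_one ?_ hall3
              intro hnil
              rw [hnil, List.length_nil] at hm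
              omega
            refine ⟨⟨by omega, hbound, ?_, hright⟩, ?_⟩
            · rw [show (1 : ℕ) + 1 - 1 = 1 by omega, hs2, hr1, hs1]
              omega
            · rw [hr1, hs1]
              omega
          · -- i ≥ 1 and j - 1 < i, but j > i gives j - 1 ≥ i: contradiction
            omega
        · -- j - 1 ≥ max i 1
          have hl : seq L j = seq L' (j - 1) + 1 := by
            have := hseq_high (j - 1) (by omega) (by omega) (by omega)
            rwa [show j - 1 + 1 = j by omega] at this
          have hleft : seq L (j + 1 - 1) < seq L (j + 1) := by
            rw [show j + 1 - 1 = j by omega, hl, hr1]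
            omega
          exact ⟨⟨by omega, hbound, hleft, hright⟩, by rw [hr1]; omega⟩
  -- assemble the width comparison
  have hA : ∀ j ∈ maxIndices L', LocalMaxAt L' j := fun j hj => (mem_maxIndices.1 hj).2
  have hforall : List.Forall₂ (· ≤ ·) ((maxIndices L').map (seq L'))
      ((maxIndices L').map (seq L ∘ φ)) := by
    rw [List.forall₂_map_right_iff, List.forall₂_map_left_iff]
    exact List.forall₂_same.2 (fun j hj => (hkey j (hA j hj)).2)
  have hsub : ((maxIndices L').map φ).Sublist (maxIndices L) := by
    refine sublist_of_subset_pairwise_lt ?_ (pairwise_maxIndices L) ?_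
    · exact List.Pairwise.map φ hφmono (pairwise_maxIndices L')
    · intro x hx
      obtain ⟨j, hj, rfl⟩ := List.mem_map.1 hx
      have hmax := (hkey j (hA j hj)).1
      exact mem_maxIndices.2 ⟨hmax.2.1, hmax⟩
  have := no_lex_of_dominated (zs := (maxIndices L').map (seq L ∘ φ))
    (ys := (maxIndices L).map (seq L)) hforall (by rw [← List.map_map]; exact hsub.map (seq L))
  exact this
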